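/- Let h : ℝ^n → ℝ ∪ {∞} be proper, closed, convex, and γ > 0. Then for all y ∈ ℝ^n, the Moreau identity holds: y = prox_{γh}(y) + γ · prox_{γ^{-1} h*}(γ^{-1} y), where h* is the Fenchel conjugate of h. -/

import Mathlib

open scoped InnerProductSpace RealInnerProductSpace
open Filter Topology

noncomputable section

abbrev E (n : ℕ) := EuclideanSpace ℝ (Fin n)

/-- Convexity for extended-real-valued functions. -/
def EConvexOn {n : ℕ} (f : E n → EReal) : Prop :=
  ∀ x y : E n, ∀ a b : ℝ, 0 ≤ a → 0 ≤ b → a + b = 1 →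
    f (a • x + b • y) ≤ (a : EReal) * f x + (b : EReal) * f y

def ProperFun {n : ℕ} (f : E n → EReal) : Prop :=
  (∃ x, f x ≠ ⊤) ∧ ∀ x, f x ≠ ⊥

def ProperClosedConvex {n : ℕ} (f : E n → EReal) : Prop :=
  ProperFun f ∧ LowerSemicontinuous f ∧ EConvexOn f

/-- `f` is strongly convex with modulus `μ`: `f - (μ/2)‖·‖²` is convex. -/
def StronglyConvexWithMod {n : ℕ} (μ : ℝ) (f : E n → EReal) : Prop :=
  EConvexOn (fun x => f x - ((μ / 2 * ‖x‖ ^ 2 : ℝ) : EReal))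

/-- Fenchel conjugate. -/
def conjFn {n : ℕ} (f : E n → EReal) (y : E n) : EReal :=
  ⨆ x : E n, ((⟪x, y⟫_ℝ : ℝ) : EReal) - f x

/-- Convex subdifferential. -/
def Subdiff {n : ℕ} (f : E n → EReal) (x : E n) : Set (E n) :=
  {v | ∀ z, f x + ((⟪v, z - x⟫_ℝ : ℝ) : EReal) ≤ f z}

/-- `p` is the proximal point of `x` for `h` with stepsize `γ`. -/
def IsProx {n : ℕ} (γ : ℝ) (h : E n → EReal) (x p : E n) : Prop :=
  ∀ z : E n, h p + ((1 / (2 * γ) * ‖p - x‖ ^ 2 : ℝ) : EReal) ≤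
    h z + ((1 / (2 * γ) * ‖z - x‖ ^ 2 : ℝ) : EReal)

/-- Moreau envelope. -/
def moreauEnv {n : ℕ} (γ : ℝ) (h : E n → EReal) (x : E n) : EReal :=
  ⨅ z : E n, h z + ((1 / (2 * γ) * ‖z - x‖ ^ 2 : ℝ) : EReal)

/-- Dual objective `ψ(y) = f*(-Aᵀy) + g*(y)`. -/
def dualObj {n m : ℕ} (f : E n → EReal) (g : E m → EReal) (A : E n →L[ℝ] E m)
    (y : E m) : EReal :=
  conjFn f (-(ContinuousLinearMap.adjoint A y)) + conjFn g y

/-- The alternating minimization envelope `ψ_γ(y) = -L_γ(x(y), z_γ(y), y)`. -/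
def AME {n m : ℕ} (f : E n → EReal) (g : E m → EReal) (A : E n →L[ℝ] E m)
    (γ : ℝ) (xmin : E m → E n) (zmin : E m → E m) (y : E m) : EReal :=
  -(f (xmin y) + g (zmin y)
    + ((⟪y, A (xmin y) - zmin y⟫_ℝ + γ / 2 * ‖A (xmin y) - zmin y‖ ^ 2 : ℝ) : EReal))


set_option maxHeartbeats 1000000

/-- Moreau identity: `y = prox_{γh}(y) + γ • prox_{γ⁻¹ h*}(γ⁻¹ • y)`. -/
theorem moreau_identity
    {n : ℕ} (γ : ℝ) (hγ : 0 < γ) (h : E n → EReal) (hh : ProperClosedConvex h)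
    (p q : E n → E n)
    (hp : ∀ x, IsProx γ h x (p x))
    (hq : ∀ x, IsProx γ⁻¹ (conjFn h) x (q x)) :
    ∀ y : E n, y = p y + γ • q (γ⁻¹ • y) := by
  obtain ⟨⟨⟨x₀, hx₀⟩, hbot⟩, _, hconv⟩ := hh
  intro y
  set P := p y with hPdef
  set u : E n := γ⁻¹ • (y - P) with hudef
  set c0 : E n := γ⁻¹ • y with hc0def
  set Q := q c0 with hQdef
  -- Step A : h P is real
  have hPtop : h P ≠ ⊤ := by
    intro hT
    have c₀ : ℝ := 0
    have hx₀' : h x₀ = ((h x₀).toReal : EReal) := (EReal.coe_toReal hx₀ (hbot x₀)).symm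
    have h1 := hp y x₀
    rw [hT, hx₀', ← EReal.coe_add] at h1
    simp only [EReal.top_add_coe, top_le_iff] at h1
    exact EReal.coe_ne_top _ h1
  set a : ℝ := (h P).toReal with hadef
  have hA : h P = (a : EReal) := (EReal.coe_toReal hPtop (hbot P)).symm
  -- Step B : subgradient u ∈ ∂h(P)
  have hsub : ∀ z : E n, (a : EReal) + ((⟪u, z - P⟫_ℝ : ℝ) : EReal) ≤ h z := by
    intro z
    by_cases hz : h z = ⊤
    · rw [hz]; exact le_top
    set c : ℝ := (h z).toReal with hcdef
    have hC : h z = (c : EReal) := (EReal.coe_toReal hz (hbot z)).symm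
    rw [hC, ← EReal.coe_add, EReal.coe_le_coe_iff]
    -- real goal : a + ⟪u, z - P⟫ ≤ c
    have key : ∀ t : ℝ, 0 < t → t ≤ 1 →
        a + ⟪u, z - P⟫_ℝ ≤ c + t * (‖z - P‖ ^ 2 / (2 * γ)) := by
      intro t ht ht1
      have h1 := hp y (t • z + (1 - t) • P)
      have h2 := hconv z P t (1 - t) ht.le (by linarith) (by ring)
      rw [hA, hC] at h2
      rw [← EReal.coe_mul, ← EReal.coe_mul, ← EReal.coe_add] at h2
      have h3 : h P + ((1 / (2 * γ) * ‖P - y‖ ^ 2 : ℝ) : EReal) ≤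
          ((t * c + (1 - t) * a + 1 / (2 * γ) * ‖(t • z + (1 - t) • P) - y‖ ^ 2 : ℝ) : EReal) := by
        refine h1.trans ?_
        rw [EReal.coe_add]
        exact add_le_add_left h2 _
      rw [hA, ← EReal.coe_add, EReal.coe_le_coe_iff] at h3
      -- expand the norm
      have he : (t • z + (1 - t) • P) - y = (P - y) + t • (z - P) := by module
      rw [he] at h3
      have hn : ‖(P - y) + t • (z - P)‖ ^ 2
          = ‖P - y‖ ^ 2 + 2 * (t * ⟪P - y, z - P⟫_ℝ) + t ^ 2 * ‖z - P‖ ^ 2 := by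
        rw [norm_add_sq_real, real_inner_smul_right, norm_smul]
        rw [Real.norm_eq_abs, abs_of_pos ht]
        ring
      rw [hn] at h3
      have hiu : ⟪u, z - P⟫_ℝ = -(γ⁻¹ * ⟪P - y, z - P⟫_ℝ) := by
        rw [hudef, real_inner_smul_left]
        rw [show y - P = -(P - y) by abel, inner_neg_left]
        ring
      have hγ' : (0:ℝ) < 2 * γ := by linarith
      have h4 : t * (a + ⟪u, z - P⟫_ℝ) ≤ t * (c + t * (‖z - P‖ ^ 2 / (2 * γ))) := by
        rw [hiu]
        ring_nf
        ring_nf at h3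
        linarith
      exact (mul_le_mul_iff_right₀ ht).mp h4
    refine le_of_forall_pos_le_add ?_
    intro ε hε
    set n2 : ℝ := ‖z - P‖ ^ 2 with hn2
    have hn2nn : 0 ≤ n2 := by positivity
    set t : ℝ := min 1 (ε * (2 * γ) / (n2 + 1)) with htdef
    have ht0 : 0 < t := by
      apply lt_min one_pos
      positivity
    have ht1 : t ≤ 1 := min_le_left _ _
    have h5 := key t ht0 ht1
    have h6 : t * (n2 / (2 * γ)) ≤ ε := by
      have htle : t ≤ ε * (2 * γ) / (n2 + 1) := min_le_right _ _
      have : t * (n2 / (2 * γ)) ≤ (ε * (2 * γ) / (n2 + 1)) * (n2 / (2 * γ)) := by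
        apply mul_le_mul_of_nonneg_right htle
        positivity
      refine this.trans ?_
      rw [div_mul_div_comm]
      rw [div_le_iff₀ (by positivity)]
      nlinarith
    linarith
  -- Step C : conjFn h u = ⟨P,u⟩ - a
  set b : ℝ := ⟪P, u⟫_ℝ - a with hbdef
  have hlow : ∀ w : E n, ((⟪P, w⟫_ℝ - a : ℝ) : EReal) ≤ conjFn h w := by
    intro w
    have := le_iSup (fun x : E n => ((⟪x, w⟫_ℝ : ℝ) : EReal) - h x) P
    rwa [hA, ← EReal.coe_sub] at this
  have hcu : conjFn h u = (b : EReal) := by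
    apply le_antisymm
    · apply iSup_le
      intro x
      by_cases hx : h x = ⊤
      · rw [hx]
        simp
      set c : ℝ := (h x).toReal with hcdef
      have hC : h x = (c : EReal) := (EReal.coe_toReal hx (hbot x)).symm
      rw [hC, ← EReal.coe_sub, EReal.coe_le_coe_iff]
      have := hsub x
      rw [hC, ← EReal.coe_add, EReal.coe_le_coe_iff] at this
      have hi : ⟪u, x - P⟫_ℝ = ⟪x, u⟫_ℝ - ⟪P, u⟫_ℝ := by
        rw [inner_sub_right, real_inner_comm u x, real_inner_comm u P]
      rw [hi] at this
      rw [hbdef]; linarith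
    · exact hlow u
  have hbotconj : ∀ w : E n, conjFn h w ≠ ⊥ := by
    intro w hW
    have := hlow w
    rw [hW, le_bot_iff] at this
    exact EReal.coe_ne_bot _ this
  -- Step D+E : u is a prox point of conjFn h at c0 with step γ⁻¹
  have hprxu : IsProx γ⁻¹ (conjFn h) c0 u := by
    intro w
    have hD : ((b + ⟪P, w - u⟫_ℝ : ℝ) : EReal) ≤ conjFn h w := by
      refine le_trans ?_ (hlow w)
      rw [EReal.coe_le_coe_iff]
      rw [hbdef]
      have hPwu : ⟪P, w - u⟫_ℝ = ⟪P, w⟫_ℝ - ⟪P, u⟫_ℝ := inner_sub_right _ _ _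
      rw [hPwu]
      ring_nf
      try exact le_rfl
      try linarith
    calc conjFn h u + ((1 / (2 * γ⁻¹) * ‖u - c0‖ ^ 2 : ℝ) : EReal)
        = ((b + 1 / (2 * γ⁻¹) * ‖u - c0‖ ^ 2 : ℝ) : EReal) := by
          rw [hcu, ← EReal.coe_add]
      _ ≤ ((b + ⟪P, w - u⟫_ℝ + 1 / (2 * γ⁻¹) * ‖w - c0‖ ^ 2 : ℝ) : EReal) := by
          rw [EReal.coe_le_coe_iff]
          have hic : u - c0 = -(γ⁻¹ • P) := by rw [hudef, hc0def]; module
          have e1 : w - c0 = (w - u) + (u - c0) := by abel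
          rw [e1, hic, norm_add_sq_real, inner_neg_right, real_inner_smul_right,
            real_inner_comm P (w - u)]
          have hs : 1 / (2 * γ⁻¹) = γ / 2 := by field_simp
          rw [hs]
          have hγγ : γ * γ⁻¹ = 1 := mul_inv_cancel₀ hγ.ne'
          have hI : γ * (γ⁻¹ * ⟪P, w - u⟫_ℝ) = ⟪P, w - u⟫_ℝ := by
            rw [← mul_assoc, hγγ, one_mul]
          nlinarith [mul_nonneg hγ.le (sq_nonneg ‖w - u‖), hI]
      _ ≤ conjFn h w + ((1 / (2 * γ⁻¹) * ‖w - c0‖ ^ 2 : ℝ) : EReal) := by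
          rw [EReal.coe_add]
          exact add_le_add_left hD _
  -- Step F : uniqueness of the prox point
  have hqq := hq c0
  have hFle1 := hprxu Q
  have hFle2 := hqq u
  have hQtop : conjFn h Q ≠ ⊤ := by
    intro hT
    rw [hT] at hFle2
    simp only [EReal.top_add_coe, top_le_iff] at hFle2
    rw [hcu, ← EReal.coe_add] at hFle2
    exact EReal.coe_ne_top _ hFle2
  set cQ : ℝ := (conjFn h Q).toReal with hcQdef
  have hCQ : conjFn h Q = (cQ : EReal) := (EReal.coe_toReal hQtop (hbotconj Q)).symm
  rw [hcu, hCQ, ← EReal.coe_add, ← EReal.coe_add, EReal.coe_le_coe_iff] at hFle1 hFle2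
  have hFeq : b + 1 / (2 * γ⁻¹) * ‖u - c0‖ ^ 2 = cQ + 1 / (2 * γ⁻¹) * ‖Q - c0‖ ^ 2 :=
    le_antisymm hFle1 hFle2
  set m : E n := (1/2 : ℝ) • u + (1/2 : ℝ) • Q with hmdef
  have hm : conjFn h m ≤ (((b + cQ)/2 : ℝ) : EReal) := by
    apply iSup_le
    intro x
    by_cases hx : h x = ⊤
    · rw [hx]; simp
    set c : ℝ := (h x).toReal with hcdef
    have hC : h x = (c : EReal) := (EReal.coe_toReal hx (hbot x)).symm
    rw [hC, ← EReal.coe_sub, EReal.coe_le_coe_iff]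
    have h8 := le_iSup (fun x' : E n => ((⟪x', u⟫_ℝ : ℝ) : EReal) - h x') x
    have h9 := le_iSup (fun x' : E n => ((⟪x', Q⟫_ℝ : ℝ) : EReal) - h x') x
    rw [hC, ← EReal.coe_sub] at h8 h9
    have h8' : ⟪x, u⟫_ℝ - c ≤ b := by
      have := h8.trans_eq hcu
      exact EReal.coe_le_coe_iff.mp this
    have h9' : ⟪x, Q⟫_ℝ - c ≤ cQ := by
      have := h9.trans_eq hCQ
      exact EReal.coe_le_coe_iff.mp this
    have hxm : ⟪x, m⟫_ℝ = (1/2) * ⟪x, u⟫_ℝ + (1/2) * ⟪x, Q⟫_ℝ := by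
      simp only [hmdef, inner_add_right, real_inner_smul_right]
    rw [hxm]; linarith
  have h7 := hprxu m
  rw [hcu, ← EReal.coe_add] at h7
  have h7' : ((b + 1 / (2 * γ⁻¹) * ‖u - c0‖ ^ 2 : ℝ) : EReal) ≤
      (((b + cQ)/2 + 1 / (2 * γ⁻¹) * ‖m - c0‖ ^ 2 : ℝ) : EReal) := by
    refine h7.trans ?_
    rw [EReal.coe_add]
    exact add_le_add_left hm _
  rw [EReal.coe_le_coe_iff] at h7'
  -- parallelogram identity
  have e2 : m - c0 = (1/2 : ℝ) • (u - c0) + (1/2 : ℝ) • (Q - c0) := by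
    rw [hmdef]; module
  have e3 : u - Q = (u - c0) - (Q - c0) := by abel
  have hABI : ‖u - Q‖ ^ 2 = ‖u - c0‖ ^ 2 - 2 * ⟪u - c0, Q - c0⟫_ℝ + ‖Q - c0‖ ^ 2 := by
    rw [e3]; exact norm_sub_sq_real _ _
  have hM : ‖m - c0‖ ^ 2 = (1/4) * ‖u - c0‖ ^ 2 + (1/2) * ⟪u - c0, Q - c0⟫_ℝ
      + (1/4) * ‖Q - c0‖ ^ 2 := by
    rw [e2, norm_add_sq_real, real_inner_smul_left, real_inner_smul_right, norm_smul, norm_smul]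
    simp only [Real.norm_eq_abs]
    rw [abs_of_pos (by norm_num : (0:ℝ) < 1/2)]
    ring
  have hpar : ‖m - c0‖ ^ 2 = (‖u - c0‖ ^ 2 + ‖Q - c0‖ ^ 2)/2 - ‖u - Q‖ ^ 2/4 := by
    linarith [hABI, hM]
  rw [hpar] at h7'
  have hs : 1 / (2 * γ⁻¹) = γ / 2 := by field_simp
  rw [hs] at h7' hFeq
  have hnn : 0 ≤ ‖u - Q‖ ^ 2 := sq_nonneg _
  have hz2 : ‖u - Q‖ ^ 2 = 0 := by nlinarith [hγ]
  have huQ : u = Q := by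
    have : ‖u - Q‖ = 0 := by
      have := sq_eq_zero_iff.mp hz2
      exact this
    rw [norm_eq_zero, sub_eq_zero] at this
    exact this
  have hgu : γ • u = y - P := by
    rw [hudef, smul_smul, mul_inv_cancel₀ hγ.ne', one_smul]
  rw [← huQ, hgu]
  abel
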